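/- Consider on ℝ⁵ with coordinates (t,Q₁,Q₂,P₁,P₂), t in a domain where t>0, the Hamiltonian K(t,Q,P) = t²( P₁² + P₂² + Q₁² + Q₂² + c(P₁Q₁ + P₂Q₂) + ½α₁(Q₁³+Q₂³) + (1/6)α₂(Q₁³−Q₂³) ), where c, α₁, α₂ are real constants. Then K satisfies both Forbat conditions: for i ≠ j ∈ {1,2}, K_{Pᵢ}(K_{QᵢQⱼ}K_{Pⱼ} − K_{QᵢPⱼ}K_{Qⱼ}) = K_{Qᵢ}(K_{PᵢQⱼ}K_{Pⱼ} − K_{PᵢPⱼ}K_{Qⱼ}), and for each i, K_{Pᵢ}K_{Qᵢt} = K_{Qᵢ}K_{Pᵢt}. -/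

import Mathlib

noncomputable section

/-- The phase space `(J¹τ)* ≅ ℝ^{2n+1}` with coordinates `(t, Q, P)`. -/
abbrev Pha (n : ℕ) : Type := ℝ × (Fin n → ℝ) × (Fin n → ℝ)

variable {n : ℕ}

/-- The coordinate vector `∂/∂t`. -/
def eT : Pha n := (1, 0, 0)

/-- The coordinate vector `∂/∂Qⁱ`. -/
def eQ (i : Fin n) : Pha n := (0, Pi.single i 1, 0)

/-- The coordinate vector `∂/∂Pᵢ`. -/
def eP (i : Fin n) : Pha n := (0, 0, Pi.single i 1)

/-- First partial derivative of `f` at `x` in direction `v`. -/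
def pd (f : Pha n → ℝ) (x v : Pha n) : ℝ := fderiv ℝ f x v

/-- Second partial derivative `∂_u ∂_v f` at `x`. -/
def pd2 (f : Pha n → ℝ) (x u v : Pha n) : ℝ :=
  fderiv ℝ (fun y => fderiv ℝ f y v) x u

/-- The 2-form `ω_R = Σₗ λₗ(Qˡ) dPₗ∧dQˡ`, evaluated at `x` on tangent vectors
`v, w`. -/
def omegaR (lam : Fin n → ℝ → ℝ) (x v w : Pha n) : ℝ :=
  ∑ l, lam l (x.2.1 l) * (v.2.2 l * w.2.1 l - w.2.2 l * v.2.1 l)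

/-- The Hamiltonian vector field
`X_h = ∂/∂t + Σᵢ K_{Pᵢ} ∂/∂Qⁱ - Σᵢ K_{Qⁱ} ∂/∂Pᵢ`. -/
def Xh (K : Pha n → ℝ) (x : Pha n) : Pha n :=
  (1, fun i => pd K x (eP i), fun i => -pd K x (eQ i))

/-- Lie derivative of a (pointwise bilinear) 2-form `ω` along a vector field
`X`, evaluated at `x` on constant tangent vectors `v, w`:
`(L_X ω)(v,w) = X(ω(v,w)) + ω(∇_v X, w) + ω(v, ∇_w X)`. -/
def lieDer (X : Pha n → Pha n) (ω : Pha n → Pha n → Pha n → ℝ)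
    (x v w : Pha n) : ℝ :=
  fderiv ℝ (fun y => ω y v w) x (X x)
    + ω x (fderiv ℝ X x v) w + ω x v (fderiv ℝ X x w)

/-- The eigenvector field `Xᵢ = K_{Pᵢ} ∂/∂Qⁱ - K_{Qⁱ} ∂/∂Pᵢ` (no sum). -/
def Xev (K : Pha n → ℝ) (i : Fin n) (x : Pha n) : Pha n :=
  (0, Pi.single i (pd K x (eP i)), Pi.single i (-pd K x (eQ i)))

/-- The separable Hamiltonian (6.8) of the example. -/
def Kex (c a1 a2 : ℝ) : Pha 2 → ℝ := fun x =>
  x.1 ^ 2 * ((x.2.2 0) ^ 2 + (x.2.2 1) ^ 2 + (x.2.1 0) ^ 2 + (x.2.1 1) ^ 2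
    + c * (x.2.2 0 * x.2.1 0 + x.2.2 1 * x.2.1 1)
    + (1 / 2) * a1 * ((x.2.1 0) ^ 3 + (x.2.1 1) ^ 3)
    + (1 / 6) * a2 * ((x.2.1 0) ^ 3 - (x.2.1 1) ^ 3))

namespace ForbatAux

lemma hsq {E : Type*} [NormedAddCommGroup E] [NormedSpace ℝ E] {f : E → ℝ}
    {f' : E →L[ℝ] ℝ} {x : E} (h : HasFDerivAt f f' x) :
    HasFDerivAt (fun y => f y ^ 2) ((2 * f x) • f') x := by
  have h2 : HasFDerivAt (fun y => f y * f y) _ x := h.mul h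
  have e1 : (fun y => f y * f y) = fun y => f y ^ 2 := by funext y; ring
  have e2 : f x • f' + f x • f' = (2 * f x) • f' := by rw [two_mul, add_smul]
  rw [e1, e2] at h2; exact h2

lemma hcube {E : Type*} [NormedAddCommGroup E] [NormedSpace ℝ E] {f : E → ℝ}
    {f' : E →L[ℝ] ℝ} {x : E} (h : HasFDerivAt f f' x) :
    HasFDerivAt (fun y => f y ^ 3) ((3 * f x ^ 2) • f') x := by
  have h2 : HasFDerivAt (fun y => f y ^ 2 * f y) _ x := (hsq h).mul h
  have e1 : (fun y => f y ^ 2 * f y) = fun y => f y ^ 3 := by funext y; ring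
  have e2 : (f x ^ 2) • f' + f x • ((2 * f x) • f') = (3 * f x ^ 2) • f' := by
    rw [smul_smul, ← add_smul]; congr 1; ring
  rw [e1, e2] at h2; exact h2


def LQ (i : Fin 2) : Pha 2 →L[ℝ] ℝ :=
  (ContinuousLinearMap.proj i).comp
    ((ContinuousLinearMap.fst ℝ (Fin 2 → ℝ) (Fin 2 → ℝ)).comp (ContinuousLinearMap.snd ℝ ℝ _))
def LP (i : Fin 2) : Pha 2 →L[ℝ] ℝ :=
  (ContinuousLinearMap.proj i).comp
    ((ContinuousLinearMap.snd ℝ (Fin 2 → ℝ) (Fin 2 → ℝ)).comp (ContinuousLinearMap.snd ℝ ℝ _))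

def Gex (c a1 a2 : ℝ) (x : Pha 2) : ℝ :=
  (x.2.2 0) ^ 2 + (x.2.2 1) ^ 2 + (x.2.1 0) ^ 2 + (x.2.1 1) ^ 2
    + c * (x.2.2 0 * x.2.1 0 + x.2.2 1 * x.2.1 1)
    + (1 / 2) * a1 * ((x.2.1 0) ^ 3 + (x.2.1 1) ^ 3)
    + (1 / 6) * a2 * ((x.2.1 0) ^ 3 - (x.2.1 1) ^ 3)

def dGex (c a1 a2 : ℝ) (x w : Pha 2) : ℝ :=
  2 * x.2.2 0 * w.2.2 0 + 2 * x.2.2 1 * w.2.2 1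
    + 2 * x.2.1 0 * w.2.1 0 + 2 * x.2.1 1 * w.2.1 1
    + c * (w.2.2 0 * x.2.1 0 + x.2.2 0 * w.2.1 0 + w.2.2 1 * x.2.1 1 + x.2.2 1 * w.2.1 1)
    + (1 / 2) * a1 * (3 * x.2.1 0 ^ 2 * w.2.1 0 + 3 * x.2.1 1 ^ 2 * w.2.1 1)
    + (1 / 6) * a2 * (3 * x.2.1 0 ^ 2 * w.2.1 0 - 3 * x.2.1 1 ^ 2 * w.2.1 1)

lemma fderiv_Kex (c a1 a2 : ℝ) (x v : Pha 2) :
    fderiv ℝ (Kex c a1 a2) x v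
      = 2 * x.1 * v.1 * Gex c a1 a2 x + x.1 ^ 2 * dGex c a1 a2 x v := by
  have ht : HasFDerivAt (fun y : Pha 2 => y.1)
      (ContinuousLinearMap.fst ℝ ℝ ((Fin 2 → ℝ) × (Fin 2 → ℝ))) x := hasFDerivAt_fst
  have hq : ∀ i : Fin 2, HasFDerivAt (fun y : Pha 2 => y.2.1 i) (LQ i) x :=
    fun i => (LQ i).hasFDerivAt
  have hp : ∀ i : Fin 2, HasFDerivAt (fun y : Pha 2 => y.2.2 i) (LP i) x :=
    fun i => (LP i).hasFDerivAt
  have hG : HasFDerivAt (fun y : Pha 2 => Gex c a1 a2 y) _ x :=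
    ((((((hsq (hp 0)).add (hsq (hp 1))).add (hsq (hq 0))).add (hsq (hq 1))).add
      ((((hp 0).mul (hq 0)).add ((hp 1).mul (hq 1))).const_mul c)).add
      (((hcube (hq 0)).add (hcube (hq 1))).const_mul (1 / 2 * a1))).add
      (((hcube (hq 0)).sub (hcube (hq 1))).const_mul (1 / 6 * a2))
  have hK : HasFDerivAt (Kex c a1 a2) _ x := (hsq ht).mul hG
  rw [hK.fderiv]
  simp [LQ, LP, Gex, dGex]
  ring

lemma fderiv2_Kex (c a1 a2 : ℝ) (x u v : Pha 2) :
    fderiv ℝ (fun y => fderiv ℝ (Kex c a1 a2) y v) x u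
      = 2 * u.1 * v.1 * Gex c a1 a2 x + 2 * x.1 * v.1 * dGex c a1 a2 x u
        + 2 * x.1 * u.1 * dGex c a1 a2 x v
        + x.1 ^ 2 * (2 * (u.2.2 0 * v.2.2 0 + u.2.2 1 * v.2.2 1
              + u.2.1 0 * v.2.1 0 + u.2.1 1 * v.2.1 1)
            + c * (u.2.2 0 * v.2.1 0 + v.2.2 0 * u.2.1 0
              + u.2.2 1 * v.2.1 1 + v.2.2 1 * u.2.1 1)
            + (1 / 2) * a1 * (6 * x.2.1 0 * u.2.1 0 * v.2.1 0
              + 6 * x.2.1 1 * u.2.1 1 * v.2.1 1)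
            + (1 / 6) * a2 * (6 * x.2.1 0 * u.2.1 0 * v.2.1 0
              - 6 * x.2.1 1 * u.2.1 1 * v.2.1 1)) := by
  have hrw : (fun y => fderiv ℝ (Kex c a1 a2) y v)
      = fun y : Pha 2 => 2 * y.1 * v.1 * Gex c a1 a2 y + y.1 ^ 2 * dGex c a1 a2 y v :=
    funext fun y => fderiv_Kex c a1 a2 y v
  rw [hrw]
  have ht : HasFDerivAt (fun y : Pha 2 => y.1)
      (ContinuousLinearMap.fst ℝ ℝ ((Fin 2 → ℝ) × (Fin 2 → ℝ))) x := hasFDerivAt_fst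
  have hq : ∀ i : Fin 2, HasFDerivAt (fun y : Pha 2 => y.2.1 i) (LQ i) x :=
    fun i => (LQ i).hasFDerivAt
  have hp : ∀ i : Fin 2, HasFDerivAt (fun y : Pha 2 => y.2.2 i) (LP i) x :=
    fun i => (LP i).hasFDerivAt
  have hG : HasFDerivAt (fun y : Pha 2 => Gex c a1 a2 y) _ x :=
    ((((((hsq (hp 0)).add (hsq (hp 1))).add (hsq (hq 0))).add (hsq (hq 1))).add
      ((((hp 0).mul (hq 0)).add ((hp 1).mul (hq 1))).const_mul c)).add
      (((hcube (hq 0)).add (hcube (hq 1))).const_mul (1 / 2 * a1))).add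
      (((hcube (hq 0)).sub (hcube (hq 1))).const_mul (1 / 6 * a2))
  have hdG : HasFDerivAt (fun y : Pha 2 => dGex c a1 a2 y v) _ x :=
    ((((((((hp 0).const_mul 2).mul_const (v.2.2 0)).add
        (((hp 1).const_mul 2).mul_const (v.2.2 1))).add
        (((hq 0).const_mul 2).mul_const (v.2.1 0))).add
        (((hq 1).const_mul 2).mul_const (v.2.1 1))).add
      ((((((hq 0).const_mul (v.2.2 0)).add ((hp 0).mul_const (v.2.1 0))).add
        ((hq 1).const_mul (v.2.2 1))).add ((hp 1).mul_const (v.2.1 1))).const_mul c)).add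
      (((((hsq (hq 0)).const_mul 3).mul_const (v.2.1 0)).add
        (((hsq (hq 1)).const_mul 3).mul_const (v.2.1 1))).const_mul (1 / 2 * a1))).add
      (((((hsq (hq 0)).const_mul 3).mul_const (v.2.1 0)).sub
        (((hsq (hq 1)).const_mul 3).mul_const (v.2.1 1))).const_mul (1 / 6 * a2))
  have hF : HasFDerivAt
      (fun y : Pha 2 => 2 * y.1 * v.1 * Gex c a1 a2 y + y.1 ^ 2 * dGex c a1 a2 y v) _ x :=
    (((ht.const_mul 2).mul_const v.1).mul hG).add ((hsq ht).mul hdG)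
  rw [hF.fderiv]
  simp [LQ, LP, Gex, dGex]
  ring

end ForbatAux

/-- The Hamiltonian `K` of the example satisfies both Forbat conditions on the
domain `t > 0`. -/
theorem Kex_satisfies_forbat (c a1 a2 : ℝ) (x : Pha 2) (ht : 0 < x.1) :
    (∀ i j : Fin 2, i ≠ j →
        pd (Kex c a1 a2) x (eP i) *
            (pd2 (Kex c a1 a2) x (eQ i) (eQ j) * pd (Kex c a1 a2) x (eP j)
              - pd2 (Kex c a1 a2) x (eQ i) (eP j) * pd (Kex c a1 a2) x (eQ j))
          = pd (Kex c a1 a2) x (eQ i) *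
            (pd2 (Kex c a1 a2) x (eP i) (eQ j) * pd (Kex c a1 a2) x (eP j)
              - pd2 (Kex c a1 a2) x (eP i) (eP j) * pd (Kex c a1 a2) x (eQ j)))
      ∧ (∀ i : Fin 2,
          pd (Kex c a1 a2) x (eP i) * pd2 (Kex c a1 a2) x (eQ i) eT
            = pd (Kex c a1 a2) x (eQ i) * pd2 (Kex c a1 a2) x (eP i) eT) := by
  constructor
  · intro i j hij
    simp only [pd2, ForbatAux.fderiv2_Kex]
    simp only [pd, ForbatAux.fderiv_Kex]
    fin_cases i <;> fin_cases j <;>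
      simp_all [eQ, eP, ForbatAux.Gex, ForbatAux.dGex, Pi.single_apply] <;>
      try ring
  · intro i
    simp only [pd2, ForbatAux.fderiv2_Kex]
    simp only [pd, ForbatAux.fderiv_Kex]
    fin_cases i <;>
      simp [eT, eQ, eP, ForbatAux.Gex, ForbatAux.dGex, Pi.single_apply] <;>
      try ring
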